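/- Let c > 0 be a constant and let (b_n)_{n≥1} be a sequence of non-negative real numbers such that b_n + b_m ≤ b_{n+m} + c·log(m+n) for all m, n ≥ 1. Then the limit lim_{n→∞} b_n/n exists in [0, +∞]. -/
import Mathlib


open scoped BigOperators RealInnerProductSpace
open Filter Topology

noncomputable section

/-- `Euc s` is the Euclidean space `ℝ^s`. -/
abbrev Euc (s : ℕ) := EuclideanSpace ℝ (Fin s)

/-- The additive semigroup `X₁ℕ + ⋯ + X_mℕ` generated by the vectors `X j`. -/
def sgOf {s : ℕ} {ι : Type*} [Fintype ι] (X : ι → Euc s) : Set (Euc s) :=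
  {z | ∃ u : ι → ℕ, ∑ j, (u j : ℝ) • X j = z}

/-- The lattice `X₁ℤ + ⋯ + X_mℤ` generated by the vectors `X j`. -/
def latOf {s : ℕ} {ι : Type*} [Fintype ι] (X : ι → Euc s) : Set (Euc s) :=
  {z | ∃ u : ι → ℤ, ∑ j, (u j : ℝ) • X j = z}

/-- The convex cone `X₁ℝ⁺ + ⋯ + X_mℝ⁺` generated by the vectors `X j`. -/
def coneOf {s : ℕ} {ι : Type*} [Fintype ι] (X : ι → Euc s) : Set (Euc s) :=
  {x | ∃ c : ι → ℝ, (∀ j, 0 ≤ c j) ∧ ∑ j, c j • X j = x}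

/-- The multiplicity of `z`: the number of finite words `i₁…i_n` with
`X_{i₁} + ⋯ + X_{i_n} = z`. -/
def mult {s : ℕ} {ι : Type*} [Fintype ι] (X : ι → Euc s) (z : Euc s) : ℕ :=
  Set.ncard {w : List ι | (w.map X).sum = z}

/-- The multiplicity extended to the cone: the minimum of `mult X z` over points
`z` of the semigroup nearest to `x`. -/
def multC {s : ℕ} {ι : Type*} [Fintype ι] (X : ι → Euc s) (x : Euc s) : ℕ :=
  sInf {n | ∃ z ∈ sgOf X, dist x z = Metric.infDist x (sgOf X) ∧ mult X z = n}

/-- All the vectors `X j` have integer coordinates. -/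
def IntegralVecs {s : ℕ} {ι : Type*} (X : ι → Euc s) : Prop :=
  ∀ j i, ∃ n : ℤ, X j i = (n : ℝ)

/-- The entropy `h(p) = -∑ p_j log p_j` of a probability vector. -/
def entropy {m : ℕ} (p : Fin m → ℝ) : ℝ := -∑ j, p j * Real.log (p j)

/-- The `p`-th iteration of `X`: all sums `X_{ω₁} + ⋯ + X_{ω_p}` over words `ω`. -/
def iter {s m : ℕ} (X : Fin m → Euc s) (p : ℕ) : (Fin p → Fin m) → Euc s :=
  fun ω => ∑ i, X (ω i)

lemma pow_bound (c : ℝ) (b : ℕ → ℝ)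
    (hsub : ∀ m n : ℕ, 1 ≤ m → 1 ≤ n →
      b n + b m ≤ b (n + m) + c * Real.log (m + n))
    (n : ℕ) (hn : 1 ≤ n) (k : ℕ) :
    (2:ℝ)^k * b n - c * ((2:ℝ)^k * (Real.log n + 2 * Real.log 2)
      - (Real.log n + (k + 2) * Real.log 2)) ≤ b (2^k * n) := by
  induction k with
  | zero => simp
  | succ k ih =>
    have h2 := hsub (2^k * n) (2^k * n) (Nat.one_le_iff_ne_zero.2 (by positivity))
      (Nat.one_le_iff_ne_zero.2 (by positivity))
    have hlog : Real.log ((2^k * n : ℕ) + (2^k * n : ℕ)) = (k+1) * Real.log 2 + Real.log n := by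
      push_cast
      rw [← two_mul, ← mul_assoc]
      rw [show (2:ℝ) * 2^k = 2^(k+1) by ring, Real.log_mul (by positivity) (by positivity),
        Real.log_pow]
      push_cast; ring
    rw [hlog] at h2
    have hidx : (2:ℕ)^k * n + 2^k * n = 2^(k+1) * n := by ring
    rw [hidx] at h2
    push_cast at h2 ⊢
    simp only [pow_succ] at h2 ⊢
    linarith [ih]

lemma key_bound (c : ℝ) (hc : 0 < c) (b : ℕ → ℝ) (hb : ∀ n, 0 ≤ b n)
    (hsub : ∀ m n : ℕ, 1 ≤ m → 1 ≤ n →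
      b n + b m ≤ b (n + m) + c * Real.log (m + n))
    (n : ℕ) (hn : 1 ≤ n) (G : ℝ) (hG : 0 < G)
    (hpow : ∀ k : ℕ, ((2:ℝ)^k * n) * G ≤ b (2^k * n)) :
    ∀ N : ℕ, 1 ≤ N → ((N:ℝ) - 2*n) * G - c * (Real.log N)^2 / Real.log 2 ≤ b N := by
  intro N
  induction N using Nat.strong_induction_on with
  | _ N IH =>
  intro hN1
  rcases lt_or_ge N (2*n) with hsmall | hbig
  · -- base case
    have h1 : ((N:ℝ) - 2*n) * G ≤ 0 := by
      apply mul_nonpos_of_nonpos_of_nonneg _ hG.le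
      have : (N:ℝ) < 2*n := by exact_mod_cast hsmall
      linarith
    have h2 : 0 ≤ c * (Real.log N)^2 / Real.log 2 := by positivity
    linarith [hb N]
  · -- N ≥ 2n
    set k := Nat.log 2 (N / n) with hk
    have hnpos : 0 < n := hn
    have hNn2 : 2 ≤ N / n := (Nat.le_div_iff_mul_le hnpos).2 (by linarith)
    have hNnne : N / n ≠ 0 := by omega
    have hlo : 2^k * n ≤ N := by
      calc 2^k * n ≤ (N/n) * n := Nat.mul_le_mul_right n (Nat.pow_log_le_self 2 hNnne)
        _ ≤ N := Nat.div_mul_le_self N n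
    have hhi : N < 2^(k+1) * n := by
      have h1 : N / n < 2^(k+1) := Nat.lt_pow_succ_log_self (by norm_num) _
      have h2 : N < (N/n + 1) * n := by
        calc N = n * (N/n) + N % n := (Nat.div_add_mod N n).symm
          _ < n * (N/n) + n := Nat.add_lt_add_left (Nat.mod_lt N hnpos) _
          _ = (N/n+1)*n := by ring
      calc N < (N/n + 1) * n := h2
        _ ≤ 2^(k+1) * n := Nat.mul_le_mul_right n (by omega)
    set r := N - 2^k * n with hr
    have hrN : (N:ℕ) = 2^k * n + r := by omega
    have hrlt : (r:ℝ) < N / 2 := by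
      have : (N:ℝ) < 2^(k+1) * n := by exact_mod_cast hhi
      have h2 : (r:ℝ) = N - 2^k * n := by
        rw [hr]; push_cast [Nat.cast_sub hlo]; ring
      push_cast at this ⊢
      rw [h2]
      have : (N:ℝ) < 2 * (2^k * n) := by rw [pow_succ] at this; linarith
      linarith
    have hN2 : (2:ℝ) ≤ N := by
      have : 2 ≤ N := le_trans (by omega) hbig
      exact_mod_cast this
    have hlogN : Real.log 2 ≤ Real.log N := Real.log_le_log (by norm_num) hN2
    have hlog2 : 0 < Real.log 2 := Real.log_pos (by norm_num)
    rcases Nat.eq_zero_or_pos r with hr0 | hrpos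
    · -- r = 0 : N = 2^k * n
      have hNidx : N = 2^k * n := by omega
      have := hpow k
      rw [← hNidx] at this
      have hcast : ((2:ℝ)^k * n) = (N:ℝ) := by rw [hNidx]; push_cast; ring
      rw [hcast] at this
      have hq : 0 ≤ c * (Real.log N)^2 / Real.log 2 := by positivity
      have hnG : 0 ≤ (n:ℝ) * G := by positivity
      nlinarith [this, hq, hnG]
    · -- r ≥ 1
      have hrltN : r < N := by
        have : 0 < 2^k * n := by positivity
        omega
      have hIH := IH r hrltN hrpos
      have hs := hsub r (2^k * n) hrpos (Nat.one_le_iff_ne_zero.2 (by positivity))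
      rw [← hrN] at hs
      have hlogsum : Real.log ((r:ℝ) + (2^k * n : ℕ)) = Real.log N := by
        congr 1
        push_cast [hrN]; ring
      rw [hlogsum] at hs
      have hpk := hpow k
      have hcpk : ((2:ℝ)^k * n) = ((2^k * n : ℕ) : ℝ) := by push_cast; ring
      -- log r ≤ log N - log 2
      have hrpos' : (1:ℝ) ≤ r := by exact_mod_cast hrpos
      have hlogr : Real.log r ≤ Real.log N - Real.log 2 := by
        have h1 : Real.log r ≤ Real.log ((N:ℝ)/2) :=
          Real.log_le_log (by linarith) (by linarith)
        rw [Real.log_div (by linarith) (by norm_num)] at h1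
        linarith
      have hlogrnn : 0 ≤ Real.log r := Real.log_nonneg hrpos'
      -- (log r)^2 ≤ (log N - log 2)^2 ≤ (log N)^2 - log2 * log N
      have hsq : (Real.log r)^2 / Real.log 2 + Real.log N ≤ (Real.log N)^2 / Real.log 2 := by
        have key : (Real.log r)^2 + Real.log N * Real.log 2 ≤ (Real.log N)^2 := by
          nlinarith [mul_le_mul hlogr hlogr hlogrnn (by linarith : (0:ℝ) ≤ Real.log N - Real.log 2),
            mul_le_mul_of_nonneg_left hlogN hlog2.le]
        rw [div_add' _ _ _ hlog2.ne', div_le_div_iff₀ hlog2 hlog2]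
        nlinarith [key, hlog2]
      -- combine
      have hrcast : (N:ℝ) = (2^k * n : ℕ) + r := by exact_mod_cast hrN
      have h1 : ((2^k*n : ℕ):ℝ) * G ≤ b (2^k * n) := by rw [← hcpk]; exact hpk
      have hdiv : c * (Real.log r)^2 / Real.log 2 + c * Real.log N ≤
          c * (Real.log N)^2 / Real.log 2 := by
        have := mul_le_mul_of_nonneg_left hsq hc.le
        rw [mul_add] at this
        calc c * (Real.log r)^2 / Real.log 2 + c * Real.log N
            = c * ((Real.log r)^2 / Real.log 2) + c * Real.log N := by ring
          _ ≤ c * ((Real.log N)^2 / Real.log 2) := this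
          _ = c * (Real.log N)^2 / Real.log 2 := by ring
      have h2 : ((N:ℝ) - 2*n)*G = ((2^k*n:ℕ):ℝ)*G + ((r:ℝ) - 2*n)*G := by
        rw [hrcast]; ring
      linarith [hIH, hs, h1, hdiv, h2]

lemma tend_aux (a d : ℝ) : Tendsto (fun x : ℝ => (a + d * (Real.log x)^2)/x) atTop (𝓝 0) := by
  have t1 : Tendsto (fun x : ℝ => Real.log x ^ 2 / (1 * x + 0)) atTop (𝓝 0) :=
    Real.tendsto_pow_log_div_mul_add_atTop 1 0 2 one_ne_zero
  simp only [one_mul, add_zero] at t1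
  have t2 : Tendsto (fun x : ℝ => a * x⁻¹ + d * (Real.log x ^ 2 / x)) atTop (𝓝 0) := by
    have := (tendsto_inv_atTop_zero.const_mul a).add (t1.const_mul d)
    simpa using this
  apply t2.congr'
  filter_upwards [eventually_gt_atTop (0:ℝ)] with x hx
  field_simp

lemma tend_aux1 (a d : ℝ) : Tendsto (fun x : ℝ => (a + d * Real.log x)/x) atTop (𝓝 0) := by
  have t1 : Tendsto (fun x : ℝ => Real.log x ^ 1 / (1 * x + 0)) atTop (𝓝 0) :=
    Real.tendsto_pow_log_div_mul_add_atTop 1 0 1 one_ne_zero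
  simp only [one_mul, add_zero, pow_one] at t1
  have t2 : Tendsto (fun x : ℝ => a * x⁻¹ + d * (Real.log x / x)) atTop (𝓝 0) := by
    have := (tendsto_inv_atTop_zero.const_mul a).add (t1.const_mul d)
    simpa using this
  apply t2.congr'
  filter_upwards [eventually_gt_atTop (0:ℝ)] with x hx
  field_simp

lemma evA (c : ℝ) (hc : 0 < c) (b : ℕ → ℝ) (hb : ∀ n, 0 ≤ b n)
    (hsub : ∀ m n : ℕ, 1 ≤ m → 1 ≤ n →
      b n + b m ≤ b (n + m) + c * Real.log (m + n))
    (M ε : ℝ) (hε : 0 < ε) (hfreq : ∃ᶠ n in atTop, M < b n / n) :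
    ∀ᶠ N in atTop, M - ε < b N / N := by
  rcases lt_or_ge (M - ε) 0 with hneg | hpos
  · filter_upwards [eventually_ge_atTop 1] with N hN
    have : (0:ℝ) ≤ b N / N := div_nonneg (hb N) (by positivity)
    linarith
  · have hMε : ε ≤ M := by linarith
    -- choose n
    have tE : Tendsto (fun m : ℕ => c * (Real.log m + 2 * Real.log 2) / m) atTop (𝓝 0) := by
      have := (tend_aux1 (2 * c * Real.log 2) c).comp
        (tendsto_natCast_atTop_atTop (R := ℝ))
      apply this.congr
      intro m
      simp only [Function.comp_apply]
      ring_nf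
    have hevE : ∀ᶠ m : ℕ in atTop, c * (Real.log m + 2 * Real.log 2) / m < ε / 2 :=
      tE.eventually_lt_const (by linarith)
    obtain ⟨n, hMn, hn1, hEn⟩ :=
      (hfreq.and_eventually ((eventually_ge_atTop 1).and hevE)).exists
    have hn0 : (0:ℝ) < n := by exact_mod_cast hn1
    set G : ℝ := M - ε/2 with hGdef
    clear_value G
    have hG : 0 < G := by rw [hGdef]; linarith
    have hstep : (n:ℝ) * G ≤ b n - c * (Real.log n + 2 * Real.log 2) := by
      have hA : M * n ≤ (b n / n) * n := mul_le_mul_of_nonneg_right hMn.le hn0.le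
      have hB : (c * (Real.log n + 2 * Real.log 2) / n) * n ≤ (ε/2) * n :=
        mul_le_mul_of_nonneg_right hEn.le hn0.le
      rw [div_mul_cancel₀ _ hn0.ne'] at hA
      rw [div_mul_cancel₀ _ hn0.ne'] at hB
      rw [hGdef]
      linarith
    have hpow : ∀ k : ℕ, ((2:ℝ)^k * n) * G ≤ b (2^k * n) := by
      intro k
      have pb := pow_bound c b hsub n hn1 k
      have hnn : 0 ≤ Real.log n + ((k:ℝ) + 2) * Real.log 2 := by
        have : (0:ℝ) ≤ Real.log n := Real.log_nonneg (by exact_mod_cast hn1)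
        have h2 : (0:ℝ) < Real.log 2 := Real.log_pos (by norm_num)
        positivity
      have h3 := mul_le_mul_of_nonneg_left hstep (pow_nonneg (by norm_num : (0:ℝ) ≤ 2) k)
      calc ((2:ℝ)^k * n) * G = (2:ℝ)^k * ((n:ℝ) * G) := by ring
        _ ≤ (2:ℝ)^k * (b n - c * (Real.log n + 2 * Real.log 2)) := h3
        _ ≤ b (2^k * n) := by
            have hcn := mul_nonneg hc.le hnn
            linarith [pb]
    have key := key_bound c hc b hb hsub n hn1 G hG hpow
    -- eventual bound
    have t2 : Tendsto (fun N : ℕ => (2*n*G + (c/Real.log 2) * (Real.log N)^2)/N)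
        atTop (𝓝 0) :=
      (tend_aux (2*n*G) (c/Real.log 2)).comp (tendsto_natCast_atTop_atTop (R := ℝ))
    have hev2 : ∀ᶠ N : ℕ in atTop,
        (2*n*G + (c/Real.log 2) * (Real.log N)^2)/N < ε/2 :=
      t2.eventually_lt_const (by linarith)
    filter_upwards [hev2, eventually_ge_atTop 1] with N h1 h2
    have hN0 : (0:ℝ) < N := by exact_mod_cast h2
    rw [div_lt_iff₀ hN0] at h1
    rw [lt_div_iff₀ hN0]
    have hk := key N h2
    have hexp : ((N:ℝ) - 2*n) * G = (N:ℝ)*M - (N:ℝ)*(ε/2) - 2*n*G := by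
      rw [hGdef]; ring
    have hXeq : c / Real.log 2 * Real.log (N:ℝ) ^ 2 = c * Real.log (N:ℝ) ^ 2 / Real.log 2 := by
      ring
    linarith [hk, h1, hexp, hXeq]

/-- If `(b_n)` is a sequence of non-negative reals with
`b_n + b_m ≤ b_{n+m} + c log(m+n)` for all `m, n ≥ 1` (where `c > 0`), then
`lim_{n→∞} b_n / n` exists in `[0, +∞]`. -/
theorem stmt6 (c : ℝ) (hc : 0 < c) (b : ℕ → ℝ) (hb : ∀ n, 0 ≤ b n)
    (hsub : ∀ m n : ℕ, 1 ≤ m → 1 ≤ n →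
      b n + b m ≤ b (n + m) + c * Real.log (m + n)) :
    ∃ L : ENNReal, Filter.Tendsto (fun n : ℕ => ENNReal.ofReal (b n / n))
      Filter.atTop (nhds L) := by
  set f : ℕ → ENNReal := fun n => ENNReal.ofReal (b n / n) with hf
  refine ⟨limsup f atTop, tendsto_of_le_liminf_of_limsup_le ?_ le_rfl⟩
  refine le_of_forall_lt fun x hx => ?_
  obtain ⟨y, hxy, hyl⟩ := exists_between hx
  obtain ⟨z, hxz, hzy⟩ := exists_between hxy
  have hyT : y ≠ ⊤ := (hyl.trans_le le_top).ne
  have hzT : z ≠ ⊤ := (hzy.trans (hyl.trans_le le_top)).ne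
  have hfreq' : ∃ᶠ n in atTop, y < f n := frequently_lt_of_lt_limsup (by isBoundedDefault) hyl
  have hfreqR : ∃ᶠ n in atTop, y.toReal < b n / n := by
    refine hfreq'.mono fun n hn => ?_
    exact (ENNReal.lt_ofReal_iff_toReal_lt hyT).1 hn
  have hε : 0 < y.toReal - z.toReal := by
    have := (ENNReal.toReal_lt_toReal hzT hyT).2 hzy
    linarith
  have hev := evA c hc b hb hsub y.toReal (y.toReal - z.toReal) hε hfreqR
  have hev' : ∀ᶠ N in atTop, z ≤ f N := by
    refine hev.mono fun N hN => ?_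
    have h1 : z.toReal ≤ b N / N := by linarith
    calc z = ENNReal.ofReal z.toReal := (ENNReal.ofReal_toReal hzT).symm
      _ ≤ f N := ENNReal.ofReal_le_ofReal h1
  have : z ≤ liminf f atTop := le_liminf_of_le (by isBoundedDefault) hev'
  exact lt_of_lt_of_le hxz this
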